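/- Let n ≥ 3, let G be the path (chain) graph on n vertices, with Laplacian matrix L(G), let D be a real number with D ≥ 4, and let 𝒜 be the 2n×2n real block matrix with blocks (-D·Iₙ, Iₙ; -L(G), 0). Then every complex eigenvalue of 𝒜 is real and nonpositive. -/

import Mathlib

open scoped ComplexOrder

open Matrix

lemma pathGraph_degree_le_two {n : ℕ} [DecidableRel (SimpleGraph.pathGraph n).Adj] (v : Fin n) :
    (SimpleGraph.pathGraph n).degree v ≤ 2 := by
  have h : ((SimpleGraph.pathGraph n).neighborFinset v).card ≤
      ({(v : ℕ) + 1, (v : ℕ) - 1} : Finset ℕ).card := by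
    refine Finset.card_le_card_of_injOn (fun u => (u : ℕ)) ?_ ?_
    · intro u hu
      rw [Finset.mem_coe, SimpleGraph.mem_neighborFinset, SimpleGraph.pathGraph_adj] at hu
      rcases hu with h | h
      · simp [← h]
      · simp [← h]
    · intro a _ b _ hab
      exact Fin.val_injective hab
  calc (SimpleGraph.pathGraph n).degree v ≤ _ := h
    _ ≤ 2 := by
        apply (Finset.card_insert_le _ _).trans
        simp

theorem stmt_14 {n : ℕ} (hn : 3 ≤ n)
    [DecidableRel (SimpleGraph.pathGraph n).Adj]
    (D : ℝ) (hD : 4 ≤ D) :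
    let 𝒜 : Matrix (Fin n ⊕ Fin n) (Fin n ⊕ Fin n) ℝ :=
      Matrix.fromBlocks ((-D) • 1) 1 (-((SimpleGraph.pathGraph n).lapMatrix ℝ)) 0
    ∀ lam : ℂ, lam ∈ spectrum ℂ (𝒜.map Complex.ofReal) →
      lam.im = 0 ∧ lam.re ≤ 0 := by
  intro 𝒜 lam hlam
  set L : Matrix (Fin n) (Fin n) ℝ := (SimpleGraph.pathGraph n).lapMatrix ℝ with hLdef
  set Lc : Matrix (Fin n) (Fin n) ℂ := L.map Complex.ofReal with hLc
  have hmap : 𝒜.map Complex.ofReal =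
      Matrix.fromBlocks ((-(D : ℂ)) • 1) 1 (-Lc) 0 := by
    ext (i | i) (j | j) <;>
      simp [𝒜, hLc, hLdef, Matrix.map_apply, Matrix.fromBlocks, Matrix.one_apply, apply_ite Complex.ofReal]
  -- extract eigenvector
  have hev : Module.End.HasEigenvalue (Matrix.toLin' (𝒜.map Complex.ofReal)) lam := by
    rw [Module.End.hasEigenvalue_iff_mem_spectrum]
    have := AlgEquiv.spectrum_eq (Matrix.toLinAlgEquiv'
      (R := ℂ) (n := Fin n ⊕ Fin n)) (𝒜.map Complex.ofReal)
    rw [show Matrix.toLin' (𝒜.map Complex.ofReal)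
        = Matrix.toLinAlgEquiv' (𝒜.map Complex.ofReal) from rfl, this]
    exact hlam
  obtain ⟨v, hv⟩ := hev.exists_hasEigenvector
  have hv0 : v ≠ 0 := hv.right
  have heq : (𝒜.map Complex.ofReal) *ᵥ v = lam • v := by
    have := hv.apply_eq_smul
    rwa [Matrix.toLin'_apply] at this
  -- split the eigenvector
  set x : Fin n → ℂ := v ∘ Sum.inl with hx
  set y : Fin n → ℂ := v ∘ Sum.inr with hy
  have hvelim : v = Sum.elim x y := by
    funext i; cases i <;> rfl
  rw [hmap, hvelim, Matrix.fromBlocks_mulVec] at heq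
  have h1 : ∀ i, -(D : ℂ) * x i + y i = lam * x i := by
    intro i
    have := congrFun heq (Sum.inl i)
    simpa [Matrix.neg_mulVec, Matrix.smul_mulVec, Matrix.one_mulVec, neg_smul,
      Pi.smul_apply, smul_eq_mul] using this
  have h2 : ∀ i, -((Lc *ᵥ x) i) = lam * y i := by
    intro i
    have := congrFun heq (Sum.inr i)
    simpa [Matrix.neg_mulVec] using this
  have hyx : ∀ i, y i = (lam + D) * x i := by
    intro i
    have := h1 i
    ring_nf at this ⊢
    linear_combination this
  set μ : ℂ := -(lam * (lam + D)) with hμ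
  have hLx : Lc *ᵥ x = μ • x := by
    funext i
    have := h2 i
    rw [hyx i] at this
    have : (Lc *ᵥ x) i = -(lam * ((lam + D) * x i)) := by linear_combination -this
    rw [this]
    simp [hμ]
    ring
  have hx0 : x ≠ 0 := by
    intro h
    apply hv0
    rw [hvelim]
    funext i
    cases i with
    | inl i => simp [h]
    | inr i => simp [hyx i, congrFun h i]
  -- μ is real
  have hherm : Lcᴴ = Lc := by
    ext i j
    simp only [Matrix.conjTranspose_apply, hLc, Matrix.map_apply, Complex.star_def,
      Complex.conj_ofReal]
    congr 1
    exact ((SimpleGraph.pathGraph n).isSymm_lapMatrix (R := ℝ)).apply i j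
  have hμreal : (starRingEnd ℂ) μ = μ := by
    have hc0 : star x ⬝ᵥ x ≠ 0 := fun h => hx0 (dotProduct_star_self_eq_zero.mp h)
    have hcstar : star (star x ⬝ᵥ x) = star x ⬝ᵥ x := (Matrix.star_dotProduct x x).symm
    have key : star (star x ⬝ᵥ (Lc *ᵥ x)) = star x ⬝ᵥ (Lc *ᵥ x) := by
      conv_lhs => rw [← Matrix.star_dotProduct]
      rw [Matrix.star_mulVec, hherm, ← Matrix.dotProduct_mulVec]
    rw [hLx, dotProduct_smul, smul_eq_mul, star_mul', hcstar] at key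
    exact mul_right_cancel₀ hc0 key
  have hμim : μ.im = 0 := Complex.conj_eq_iff_im.mp hμreal
  have hμre : μ = ((μ.re : ℝ) : ℂ) := (Complex.conj_eq_iff_re.mp hμreal).symm
  -- Gershgorin bounds
  have hev2 : Module.End.HasEigenvalue (Matrix.toLin' Lc) μ := by
    apply Module.End.hasEigenvalue_of_hasEigenvector (x := x)
    constructor
    · rw [Module.End.mem_eigenspace_iff, Matrix.toLin'_apply, hLx]
    · exact hx0
  obtain ⟨k, hk⟩ := eigenvalue_mem_ball hev2
  set d : ℕ := (SimpleGraph.pathGraph n).degree k with hd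
  have hdiag : Lc k k = ((d : ℝ) : ℂ) := by
    simp [hLc, hLdef, Matrix.map_apply, SimpleGraph.lapMatrix, SimpleGraph.degMatrix,
      Matrix.diagonal_apply_eq, hd]
  have hsum : (∑ j ∈ Finset.univ.erase k, ‖Lc k j‖) = (d : ℝ) := by
    have hterm : ∀ j ∈ Finset.univ.erase k, ‖Lc k j‖
        = (if (SimpleGraph.pathGraph n).Adj k j then (1 : ℝ) else 0) := by
      intro j hj
      have hjk : j ≠ k := Finset.ne_of_mem_erase hj
      simp [hLc, hLdef, Matrix.map_apply, SimpleGraph.lapMatrix, SimpleGraph.degMatrix,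
        Matrix.diagonal_apply_ne' _ hjk, apply_ite]
    rw [Finset.sum_congr rfl hterm, Finset.sum_erase _ (by simp), Finset.sum_boole]
    norm_cast
    simp [hd, SimpleGraph.degree, SimpleGraph.neighborFinset_eq_filter]
  have hd2 : d ≤ 2 := pathGraph_degree_le_two k
  rw [Metric.mem_closedBall, hsum, hdiag, hμre, Complex.dist_eq] at hk
  have hk' : |μ.re - (d : ℝ)| ≤ (d : ℝ) := by
    rwa [← Complex.ofReal_sub, Complex.norm_real, Real.norm_eq_abs] at hk
  rw [abs_le] at hk'
  have hm0 : 0 ≤ μ.re := by linarith [hk'.1]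
  have hm4 : μ.re ≤ 4 := by
    have : (d : ℝ) ≤ 2 := by exact_mod_cast hd2
    linarith [hk'.2]
  -- final algebra
  set a := lam.re with ha
  set b := lam.im with hb
  have him : μ.im = -(b * (2 * a + D)) := by
    simp [hμ, Complex.mul_im, Complex.add_re, Complex.add_im]
    ring
  have hre : μ.re = -(a * a - b * b + D * a) := by
    simp [hμ, Complex.mul_re, Complex.add_re, Complex.add_im]
    ring
  rw [him] at hμim
  rw [hre] at hm0 hm4
  have hb0 : b = 0 := by
    rcases mul_eq_zero.mp (neg_eq_zero.mp hμim) with h | h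
    · exact h
    · nlinarith
  refine ⟨hb0, ?_⟩
  rw [hb0] at hm0
  nlinarith
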